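/- Degenerate-kernel learning curve: let k(x,x') = ∑_{p=1}^{P} λ_p φ_p(x)φ_p(x') with P finite, λ_p > 0, (φ_p) orthonormal in L²(μ) with E_μ[φ_p(X)⁴] < ∞, and X₁,X₂,… i.i.d. ∼ μ. Then the Gaussian process regression MSE σ²_n(x) = k(x,x) − k_n(x)ᵀ(K_n + nτI)⁻¹k_n(x) converges almost surely, as n → ∞, to ∑_{p=1}^P τλ_p φ_p(x)²/(τ+λ_p), for every x. -/

import Mathlib

open MeasureTheory ProbabilityTheory Matrix Filter Finset Topology

/-- Push-through / Woodbury style identity for the GP posterior variance quadratic form. -/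
lemma aux_matrix16 {n Pk : ℕ} (Φ : Matrix (Fin n) (Fin Pk) ℝ) (l : Fin Pk → ℝ)
    (hl : ∀ p, 0 < l p) (τ : ℝ) (hτ : 0 < τ) (hn : 0 < n)
    (hdet : (((n : ℝ)⁻¹ • (Φᵀ * Φ)) * Matrix.diagonal l +
      τ • (1 : Matrix (Fin Pk) (Fin Pk) ℝ)).det ≠ 0)
    (w : Fin Pk → ℝ) :
    (Φ *ᵥ w) ⬝ᵥ ((Φ * Matrix.diagonal l * Φᵀ +
        ((n : ℝ) * τ) • (1 : Matrix (Fin n) (Fin n) ℝ))⁻¹ *ᵥ (Φ *ᵥ w)) =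
      w ⬝ᵥ ((((((n : ℝ)⁻¹ • (Φᵀ * Φ)) * Matrix.diagonal l +
        τ • (1 : Matrix (Fin Pk) (Fin Pk) ℝ))⁻¹) * ((n : ℝ)⁻¹ • (Φᵀ * Φ))) *ᵥ w) := by
  have hne : (n : ℝ) ≠ 0 := Nat.cast_ne_zero.2 hn.ne'
  set Λ : Matrix (Fin Pk) (Fin Pk) ℝ := Matrix.diagonal l with hΛ
  set M : Matrix (Fin n) (Fin n) ℝ :=
    Φ * Λ * Φᵀ + ((n : ℝ) * τ) • (1 : Matrix (Fin n) (Fin n) ℝ) with hM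
  set B : Matrix (Fin Pk) (Fin Pk) ℝ := (n : ℝ)⁻¹ • (Φᵀ * Φ) with hB
  set C : Matrix (Fin Pk) (Fin Pk) ℝ :=
    B * Λ + τ • (1 : Matrix (Fin Pk) (Fin Pk) ℝ) with hC
  -- M is positive definite
  have hΛps : Λ.PosSemidef := posSemidef_diagonal_iff.2 fun p => (hl p).le
  have hpsd : (Φ * Λ * Φᵀ).PosSemidef := by
    have := hΛps.mul_mul_conjTranspose_same Φ
    rwa [conjTranspose_eq_transpose_of_trivial] at this
  have hpd : (((n : ℝ) * τ) • (1 : Matrix (Fin n) (Fin n) ℝ)).PosDef := by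
    rw [smul_one_eq_diagonal]
    exact posDef_diagonal_iff.2 fun i => mul_pos (by exact_mod_cast hn) hτ
  have hMpd : M.PosDef := Matrix.PosDef.posSemidef_add hpsd hpd
  have hMdet : IsUnit M.det := hMpd.det_pos.ne'.isUnit
  have hCdet : IsUnit C.det := hdet.isUnit
  -- push-through identity
  have h1 : C * Φᵀ = (n : ℝ)⁻¹ • (Φᵀ * M) := by
    rw [hC, hB, hM]
    simp only [Matrix.add_mul, Matrix.mul_add, Matrix.smul_mul, Matrix.mul_smul,
      Matrix.one_mul, Matrix.mul_one, smul_add, smul_smul, Matrix.mul_assoc]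
    congr 1
    rw [inv_mul_cancel_left₀ hne]
  have h2 : C * (Φᵀ * M⁻¹ * Φ) = B := by
    calc C * (Φᵀ * M⁻¹ * Φ) = (C * Φᵀ) * (M⁻¹ * Φ) := by
          simp only [Matrix.mul_assoc]
      _ = (n : ℝ)⁻¹ • (Φᵀ * (M * M⁻¹) * Φ) := by
          rw [h1, Matrix.smul_mul]
          simp only [Matrix.mul_assoc]
      _ = B := by rw [Matrix.mul_nonsing_inv _ hMdet, Matrix.mul_one, hB]
  have h3 : Φᵀ * M⁻¹ * Φ = C⁻¹ * B := by
    have := congrArg (fun Z => C⁻¹ * Z) h2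
    simpa [← Matrix.mul_assoc, Matrix.nonsing_inv_mul _ hCdet] using this
  calc (Φ *ᵥ w) ⬝ᵥ (M⁻¹ *ᵥ (Φ *ᵥ w))
      = (Φ *ᵥ w) ⬝ᵥ ((M⁻¹ * Φ) *ᵥ w) := by rw [Matrix.mulVec_mulVec]
    _ = ((Φ *ᵥ w) ᵥ* (M⁻¹ * Φ)) ⬝ᵥ w := by rw [Matrix.dotProduct_mulVec]
    _ = (w ᵥ* (Φᵀ * (M⁻¹ * Φ))) ⬝ᵥ w := by rw [Matrix.vecMul_mulVec]
    _ = (w ᵥ* (C⁻¹ * B)) ⬝ᵥ w := by rw [← Matrix.mul_assoc, h3]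
    _ = w ⬝ᵥ ((C⁻¹ * B) *ᵥ w) := by rw [Matrix.dotProduct_mulVec]

theorem stmt16 {Ω α : Type*} [MeasurableSpace Ω] [MeasurableSpace α]
    (P : Measure Ω) [IsProbabilityMeasure P] (μ : Measure α) [IsProbabilityMeasure μ]
    (X : ℕ → Ω → α) (hXm : ∀ i, Measurable (X i))
    (hindep : iIndepFun X P)
    (hlaw : ∀ i, Measure.map (X i) P = μ)
    (Pk : ℕ) (l : Fin Pk → ℝ) (hl : ∀ p, 0 < l p)
    (φ : Fin Pk → α → ℝ) (hφm : ∀ p, Measurable (φ p))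
    (horth : ∀ p q, ∫ x, φ p x * φ q x ∂μ = if p = q then 1 else 0)
    (hmom4 : ∀ p, Integrable (fun x => (φ p x) ^ 4) μ)
    (k : α → α → ℝ) (hk : ∀ x y, k x y = ∑ p, l p * φ p x * φ p y)
    (τ : ℝ) (hτ : 0 < τ) :
    ∀ x : α, ∀ᵐ ω ∂P,
      Filter.Tendsto
        (fun n : ℕ =>
          k x x -
            (fun i : Fin n => k x (X i ω)) ⬝ᵥ
              (((Matrix.of fun i j : Fin n => k (X i ω) (X j ω)) +
                  ((n : ℝ) * τ) • (1 : Matrix (Fin n) (Fin n) ℝ))⁻¹ *ᵥ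
                fun i : Fin n => k x (X i ω)))
        Filter.atTop (nhds (∑ p, τ * l p * (φ p x) ^ 2 / (τ + l p))) := by
  -- integrability of products
  have hgm : ∀ p q : Fin Pk, Measurable (fun z => φ p z * φ q z) :=
    fun p q => (hφm p).mul (hφm q)
  have hsq : ∀ p, Integrable (fun z => φ p z * φ p z) μ := by
    intro p
    by_contra h
    have := horth p p
    rw [integral_undef h] at this
    simp at this
  have hint : ∀ p q, Integrable (fun z => φ p z * φ q z) μ := by
    intro p q
    refine Integrable.mono ((hsq p).add (hsq q)) (hgm p q).aestronglyMeasurable ?_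
    filter_upwards with z
    simp only [Pi.add_apply, Real.norm_eq_abs]
    have h1 : |φ p z * φ q z| ≤ φ p z * φ p z + φ q z * φ q z := by
      rw [abs_mul]
      nlinarith [sq_nonneg (|φ p z| - |φ q z|), sq_abs (φ p z), sq_abs (φ q z),
        abs_nonneg (φ p z), abs_nonneg (φ q z)]
    have h2 : (0:ℝ) ≤ φ p z * φ p z + φ q z * φ q z := by nlinarith [mul_self_nonneg (φ p z), mul_self_nonneg (φ q z)]
    rwa [abs_of_nonneg h2]
  -- strong law of large numbers for each pair (p, q)
  have hSLLN : ∀ᵐ ω ∂P, ∀ pq : Fin Pk × Fin Pk,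
      Tendsto (fun n : ℕ => (∑ i ∈ range n, φ pq.1 (X i ω) * φ pq.2 (X i ω)) / n)
        atTop (𝓝 (if pq.1 = pq.2 then (1:ℝ) else 0)) := by
    rw [ae_all_iff]
    rintro ⟨p, q⟩
    have hident : ∀ i : ℕ, IdentDistrib (fun ω => φ p (X i ω) * φ q (X i ω))
        (fun ω => φ p (X 0 ω) * φ q (X 0 ω)) P P := by
      intro i
      exact IdentDistrib.comp ⟨(hXm i).aemeasurable, (hXm 0).aemeasurable,
        by rw [hlaw, hlaw]⟩ (hgm p q)
    have hintP : Integrable (fun ω => φ p (X 0 ω) * φ q (X 0 ω)) P := by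
      have := (integrable_map_measure (hgm p q).aestronglyMeasurable
        (hXm 0).aemeasurable).1 (by rw [hlaw 0]; exact hint p q)
      exact this
    have hpair : Pairwise (Function.onFun (IndepFun · · P) fun i ω => φ p (X i ω) * φ q (X i ω)) := by
      intro i j hij
      exact (hindep.indepFun hij).comp (hgm p q) (hgm p q)
    have key := strong_law_ae_real (fun i ω => φ p (X i ω) * φ q (X i ω)) hintP hpair hident
    have hE : (∫ ω, φ p (X 0 ω) * φ q (X 0 ω) ∂P) = if p = q then (1:ℝ) else 0 := by
      rw [← horth p q, ← hlaw 0,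
        integral_map (hXm 0).aemeasurable (hgm p q).aestronglyMeasurable]
    rw [hE] at key
    exact key
  intro x
  filter_upwards [hSLLN] with ω hω
  set Λ : Matrix (Fin Pk) (Fin Pk) ℝ := Matrix.diagonal l with hΛ
  set w : Fin Pk → ℝ := fun p => l p * φ p x with hw
  set B : ℕ → Matrix (Fin Pk) (Fin Pk) ℝ :=
    fun n => Matrix.of fun p q => (∑ i ∈ range n, φ p (X i ω) * φ q (X i ω)) / n with hBdef
  -- B n → 1
  have hB : Tendsto B atTop (𝓝 (1 : Matrix (Fin Pk) (Fin Pk) ℝ)) := by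
    refine tendsto_pi_nhds.2 fun p => tendsto_pi_nhds.2 fun q => ?_
    have : (1 : Matrix (Fin Pk) (Fin Pk) ℝ) p q = if p = q then (1:ℝ) else 0 :=
      Matrix.one_apply
    rw [this]
    exact hω (p, q)
  -- the limit matrix and its determinant
  have hD : (1 : Matrix (Fin Pk) (Fin Pk) ℝ) * Λ + τ • (1 : Matrix (Fin Pk) (Fin Pk) ℝ)
      = Matrix.diagonal (fun p => l p + τ) := by
    rw [Matrix.one_mul, hΛ, smul_one_eq_diagonal, Matrix.diagonal_add]
  have hDdet : ((1 : Matrix (Fin Pk) (Fin Pk) ℝ) * Λ +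
      τ • (1 : Matrix (Fin Pk) (Fin Pk) ℝ)).det ≠ 0 := by
    rw [hD, Matrix.det_diagonal]
    exact Finset.prod_ne_zero_iff.2 fun p _ => (add_pos (hl p) hτ).ne'
  have hFc : Continuous (fun A : Matrix (Fin Pk) (Fin Pk) ℝ =>
      A * Λ + τ • (1 : Matrix (Fin Pk) (Fin Pk) ℝ)) :=
    (continuous_id.matrix_mul continuous_const).add continuous_const
  have hdetlim : Tendsto (fun n => ((B n) * Λ + τ • (1 : Matrix (Fin Pk) (Fin Pk) ℝ)).det)
      atTop (𝓝 (((1 : Matrix (Fin Pk) (Fin Pk) ℝ) * Λ +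
        τ • (1 : Matrix (Fin Pk) (Fin Pk) ℝ)).det)) :=
    ((hFc.matrix_det).continuousAt.tendsto.comp (hB))
  have hdetne : ∀ᶠ n in atTop,
      ((B n) * Λ + τ • (1 : Matrix (Fin Pk) (Fin Pk) ℝ)).det ≠ 0 :=
    hdetlim.eventually_ne hDdet
  -- the continuous function of B n
  set G : Matrix (Fin Pk) (Fin Pk) ℝ → ℝ := fun A =>
    k x x - w ⬝ᵥ (((A * Λ + τ • (1 : Matrix (Fin Pk) (Fin Pk) ℝ))⁻¹ * A) *ᵥ w) with hG
  have houter : Continuous (fun N : Matrix (Fin Pk) (Fin Pk) ℝ => w ⬝ᵥ (N *ᵥ w)) :=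
    continuous_const.dotProduct (continuous_id.matrix_mulVec continuous_const)
  have hGc : ContinuousAt G 1 := by
    have hinv : ContinuousAt Inv.inv ((1 : Matrix (Fin Pk) (Fin Pk) ℝ) * Λ +
        τ • (1 : Matrix (Fin Pk) (Fin Pk) ℝ)) := by
      apply continuousAt_matrix_inv
      rw [Ring.inverse_eq_inv']
      exact continuousAt_inv₀ hDdet
    have hc2 : ContinuousAt (fun A : Matrix (Fin Pk) (Fin Pk) ℝ =>
        (A * Λ + τ • (1 : Matrix (Fin Pk) (Fin Pk) ℝ))⁻¹) 1 :=
      ContinuousAt.comp (g := Inv.inv) hinv (hFc.continuousAt (x := 1))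
    have hc3 : ContinuousAt (fun A : Matrix (Fin Pk) (Fin Pk) ℝ =>
        (A * Λ + τ • (1 : Matrix (Fin Pk) (Fin Pk) ℝ))⁻¹ * A) 1 :=
      hc2.mul continuousAt_id
    exact continuousAt_const.sub (houter.continuousAt.comp hc3)
  have hmain : Tendsto (fun n => G (B n)) atTop (𝓝 (G 1)) := hGc.tendsto.comp hB
  -- compute G 1
  have hG1 : G 1 = ∑ p, τ * l p * (φ p x) ^ 2 / (τ + l p) := by
    have hinvD : ((1 : Matrix (Fin Pk) (Fin Pk) ℝ) * Λ +
        τ • (1 : Matrix (Fin Pk) (Fin Pk) ℝ))⁻¹ =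
        Matrix.diagonal (fun p => (l p + τ)⁻¹) := by
      rw [hD]
      refine Matrix.inv_eq_right_inv ?_
      rw [Matrix.diagonal_mul_diagonal]
      have : (fun p => (l p + τ) * (l p + τ)⁻¹) = fun _ => (1:ℝ) := by
        funext p
        exact mul_inv_cancel₀ (add_pos (hl p) hτ).ne'
      rw [this, Matrix.diagonal_one]
    rw [hG]
    simp only [hinvD, Matrix.mul_one]
    rw [hk x x]
    have hquad : w ⬝ᵥ (Matrix.diagonal (fun p => (l p + τ)⁻¹) *ᵥ w) =
        ∑ p, w p * ((l p + τ)⁻¹ * w p) := by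
      simp [dotProduct, Matrix.mulVec_diagonal]
    rw [hquad, ← Finset.sum_sub_distrib]
    refine Finset.sum_congr rfl fun p _ => ?_
    have h0 : l p + τ ≠ 0 := (add_pos (hl p) hτ).ne'
    have h0' : τ + l p ≠ 0 := (add_pos hτ (hl p)).ne'
    field_simp [hw]
    ring
  rw [hG1] at hmain
  -- eventual equality of the two sequences
  refine Tendsto.congr' ?_ hmain
  filter_upwards [hdetne, eventually_gt_atTop 0] with n hdet hn
  set Φ : Matrix (Fin n) (Fin Pk) ℝ := Matrix.of fun i p => φ p (X i ω) with hΦ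
  have hne : (n : ℝ) ≠ 0 := Nat.cast_ne_zero.2 hn.ne'
  have hBn : B n = (n : ℝ)⁻¹ • (Φᵀ * Φ) := by
    ext p q
    simp only [hBdef, Matrix.of_apply, Matrix.smul_apply, Matrix.mul_apply,
      Matrix.transpose_apply, hΦ, smul_eq_mul]
    rw [div_eq_inv_mul, ← Fin.sum_univ_eq_sum_range (fun i => φ p (X i ω) * φ q (X i ω)) n]
  have hv : (fun i : Fin n => k x (X i ω)) = Φ *ᵥ w := by
    funext i
    rw [hk]
    simp only [Matrix.mulVec, dotProduct, hΦ, Matrix.of_apply, hw]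
    exact Finset.sum_congr rfl fun p _ => by ring
  have hK : (Matrix.of fun i j : Fin n => k (X i ω) (X j ω)) = Φ * Λ * Φᵀ := by
    have hΦΛ : Φ * Λ = Matrix.of (fun (i : Fin n) (p : Fin Pk) => φ p (X i ω) * l p) := by
      ext i p
      rw [hΛ, Matrix.mul_diagonal]
      simp [hΦ]
    ext i j
    rw [Matrix.of_apply, hk, hΦΛ]
    simp only [Matrix.mul_apply, Matrix.transpose_apply, Matrix.of_apply, hΦ]
    exact Finset.sum_congr rfl fun p _ => by ring
  have hkey := aux_matrix16 Φ l hl τ hτ hn (by rw [← hBn]; exact hdet) w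
  rw [hG]
  rw [hv, hK]
  rw [hkey, hBn]
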